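/- Let ε₀ satisfy 0 < ε₀ < π/τ and set κ = cos²(τ·ε₀/2). Let ε be uniformly distributed on [-ε₀, ε₀]. Then for every g with κ·Gm ≤ g ≤ Gm, the probability that G(ε) ≤ g equals 1 − (2/(τ·ε₀))·arccos(√(g/Gm)), and for every g with 0 ≤ g < κ·Gm, the probability that G(ε) ≤ g equals 0. -/

import Mathlib

open Real MeasureTheory

/-- The cosine antenna gain with maximum gain `Gm` and beam-spread parameter `τ`. -/
noncomputable def gain (Gm τ θ : ℝ) : ℝ :=
  if |θ| ≤ Real.pi / τ then Gm * Real.cos (τ * θ / 2) ^ 2 else 0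

theorem cdf_uniform_small_error (Gm τ ε₀ κ : ℝ) (hGm : 0 < Gm) (hτ : 1 ≤ τ)
    (hε₁ : 0 < ε₀) (hε₂ : ε₀ < Real.pi / τ) (hκ : κ = Real.cos (τ * ε₀ / 2) ^ 2) :
    (∀ g : ℝ, κ * Gm ≤ g → g ≤ Gm →
      (volume {θ ∈ Set.Icc (-ε₀) ε₀ | gain Gm τ θ ≤ g}).toReal / (2 * ε₀)
        = 1 - 2 / (τ * ε₀) * Real.arccos (Real.sqrt (g / Gm))) ∧
    (∀ g : ℝ, 0 ≤ g → g < κ * Gm →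
      (volume {θ ∈ Set.Icc (-ε₀) ε₀ | gain Gm τ θ ≤ g}).toReal / (2 * ε₀) = 0) := by
  have hτ0 : (0:ℝ) < τ := lt_of_lt_of_le one_pos hτ
  have hτε : τ * ε₀ < Real.pi := by
    have := (lt_div_iff₀ hτ0).mp hε₂
    linarith
  have hhalf : τ * ε₀ / 2 < Real.pi / 2 := by linarith
  have hcos0 : 0 ≤ Real.cos (τ * ε₀ / 2) := by
    apply Real.cos_nonneg_of_mem_Icc
    have h0 : 0 < τ * ε₀ / 2 := by positivity
    exact ⟨by linarith [Real.pi_pos], by linarith⟩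
  -- rewrite gain on Icc
  have hgain : ∀ θ ∈ Set.Icc (-ε₀) ε₀, gain Gm τ θ = Gm * Real.cos (τ * θ / 2) ^ 2 := by
    intro θ hθ
    have habs : |θ| ≤ ε₀ := abs_le.mpr ⟨hθ.1, hθ.2⟩
    simp [gain, le_of_lt (lt_of_le_of_lt habs hε₂)]
  -- cos(τθ/2) nonneg and equal cos(τ|θ|/2) for θ ∈ Icc
  have hcosθ : ∀ θ ∈ Set.Icc (-ε₀) ε₀, Real.cos (τ * θ / 2) = Real.cos (τ * |θ| / 2)
      ∧ τ * |θ| / 2 ∈ Set.Icc 0 Real.pi ∧ τ * |θ| / 2 ≤ τ * ε₀ / 2 := by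
    intro θ hθ
    have habs : |θ| ≤ ε₀ := abs_le.mpr ⟨hθ.1, hθ.2⟩
    have h1 : τ * |θ| / 2 ≤ τ * ε₀ / 2 := by
      have := mul_le_mul_of_nonneg_left habs hτ0.le
      linarith
    refine ⟨?_, ⟨by positivity, by linarith [Real.pi_pos]⟩, h1⟩
    rcases abs_cases θ with ⟨h, _⟩ | ⟨h, _⟩
    · rw [h]
    · rw [h]; rw [show τ * -θ / 2 = -(τ * θ / 2) by ring, Real.cos_neg]
  constructor
  · intro g hg1 hg2
    have hκ0 : 0 ≤ κ := by rw [hκ]; positivity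
    have hg0 : 0 ≤ g := le_trans (by positivity) hg1
    have hgGm0 : 0 ≤ g / Gm := by positivity
    have hgGm1 : g / Gm ≤ 1 := (div_le_one hGm).mpr hg2
    set s := Real.sqrt (g / Gm) with hs
    have hs0 : 0 ≤ s := Real.sqrt_nonneg _
    have hs1 : s ≤ 1 := Real.sqrt_le_one.mpr hgGm1
    have hslb : Real.cos (τ * ε₀ / 2) ≤ s := by
      have : Real.sqrt κ ≤ s := Real.sqrt_le_sqrt ((le_div_iff₀ hGm).mpr (by linarith))
      rwa [hκ, Real.sqrt_sq hcos0] at this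
    have harc_le : Real.arccos s ≤ τ * ε₀ / 2 := by
      have := Real.strictAntiOn_arccos.antitoneOn
        ⟨by linarith [Real.neg_one_le_cos (τ * ε₀ / 2)], Real.cos_le_one _⟩
        ⟨by linarith, hs1⟩ hslb
      rwa [Real.arccos_cos (by positivity) (by linarith [Real.pi_pos])] at this
    set a := 2 * Real.arccos s / τ with ha
    have ha0 : 0 ≤ a := by have := Real.arccos_nonneg s; positivity
    have haε : a ≤ ε₀ := by
      rw [ha, div_le_iff₀ hτ0]
      nlinarith [Real.arccos_nonneg s]
    -- key characterization
    have hset : {θ ∈ Set.Icc (-ε₀) ε₀ | gain Gm τ θ ≤ g}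
        = Set.Icc (-ε₀) ε₀ \ Set.Ioo (-a) a := by
      ext θ
      simp only [Set.mem_setOf_eq, Set.mem_diff, Set.mem_Ioo, Set.mem_Icc, not_and, not_lt]
      constructor
      · rintro ⟨hθ, hle⟩
        refine ⟨hθ, fun h1 => ?_⟩
        by_contra h2
        push_neg at h2
        have habs : |θ| < a := abs_lt.mpr ⟨by linarith, h2⟩
        obtain ⟨hce, hmem, hle'⟩ := hcosθ θ (Set.mem_Icc.mpr hθ)
        rw [hgain θ (Set.mem_Icc.mpr hθ), hce] at hle
        have hcs : Real.cos (τ * |θ| / 2) ≤ s := by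
          have h3 : Real.cos (τ * |θ| / 2) ^ 2 ≤ g / Gm := by
            rw [le_div_iff₀ hGm]; linarith
          have h4 : 0 ≤ Real.cos (τ * |θ| / 2) := by
            apply Real.cos_nonneg_of_mem_Icc
            exact ⟨by linarith [hmem.1, Real.pi_pos], by linarith⟩
          calc Real.cos (τ * |θ| / 2) = Real.sqrt (Real.cos (τ * |θ| / 2) ^ 2) :=
                (Real.sqrt_sq h4).symm
            _ ≤ s := Real.sqrt_le_sqrt h3
        have harc : Real.arccos s ≤ τ * |θ| / 2 := by
          have := (Real.strictAntiOn_cos.le_iff_ge hmem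
            ⟨Real.arccos_nonneg s, Real.arccos_le_pi s⟩).mp
            (by rw [Real.cos_arccos (by linarith) hs1]; exact hcs)
          exact this
        have : a ≤ |θ| := by
          rw [ha, div_le_iff₀ hτ0]
          nlinarith
        linarith [lt_of_lt_of_le habs this, lt_irrefl (|θ|)]
      · rintro ⟨hθ, hout⟩
        refine ⟨hθ, ?_⟩
        have habs : a ≤ |θ| := by
          rcases le_or_gt a |θ| with h | h
          · exact h
          · exfalso
            have := abs_lt.mp h
            exact absurd (hout (by linarith)) (by push_neg; linarith [this.2])
        obtain ⟨hce, hmem, hle'⟩ := hcosθ θ (Set.mem_Icc.mpr hθ)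
        rw [hgain θ (Set.mem_Icc.mpr hθ), hce]
        have harc : Real.arccos s ≤ τ * |θ| / 2 := by
          rw [ha, div_le_iff₀ hτ0] at habs
          nlinarith
        have hcs : Real.cos (τ * |θ| / 2) ≤ s := by
          have := (Real.strictAntiOn_cos.le_iff_ge hmem
            ⟨Real.arccos_nonneg s, Real.arccos_le_pi s⟩).mpr harc
          rwa [Real.cos_arccos (by linarith) hs1] at this
        have h4 : 0 ≤ Real.cos (τ * |θ| / 2) := by
          apply Real.cos_nonneg_of_mem_Icc
          exact ⟨by linarith [hmem.1, Real.pi_pos], by linarith⟩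
        have : Real.cos (τ * |θ| / 2) ^ 2 ≤ g / Gm := by
          rw [← Real.sq_sqrt hgGm0, ← hs]
          exact pow_le_pow_left₀ h4 hcs 2
        rw [← le_div_iff₀' hGm]
        calc Real.cos (τ * |θ| / 2) ^ 2 ≤ g / Gm := this
          _ = g / Gm := rfl
      -- end ext
    rw [hset]
    have hsub : Set.Ioo (-a) a ⊆ Set.Icc (-ε₀) ε₀ := by
      intro x hx
      exact ⟨by linarith [hx.1], by linarith [hx.2]⟩
    rw [measure_diff hsub measurableSet_Ioo.nullMeasurableSet
      (by rw [Real.volume_Ioo]; exact ENNReal.ofReal_ne_top)]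
    rw [Real.volume_Icc, Real.volume_Ioo]
    rw [← ENNReal.ofReal_sub _ (by linarith : (0:ℝ) ≤ a - -a)]
    rw [ENNReal.toReal_ofReal (by linarith)]
    rw [ha]
    field_simp
    ring
  · intro g hg0 hg
    have hempty : {θ ∈ Set.Icc (-ε₀) ε₀ | gain Gm τ θ ≤ g} = ∅ := by
      ext θ
      simp only [Set.mem_setOf_eq, Set.mem_empty_iff_false, iff_false, not_and]
      intro hθ hle
      obtain ⟨hce, hmem, hle'⟩ := hcosθ θ hθ
      rw [hgain θ hθ, hce] at hle
      have h4 : 0 ≤ Real.cos (τ * |θ| / 2) := by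
        apply Real.cos_nonneg_of_mem_Icc
        exact ⟨by linarith [hmem.1, Real.pi_pos], by linarith⟩
      have hcs : Real.cos (τ * ε₀ / 2) ≤ Real.cos (τ * |θ| / 2) := by
        exact Real.strictAntiOn_cos.antitoneOn hmem
          ⟨by positivity, by linarith [Real.pi_pos]⟩ hle'
      have hsq : κ ≤ Real.cos (τ * |θ| / 2) ^ 2 := by
        rw [hκ]
        exact pow_le_pow_left₀ hcos0 hcs 2
      have := mul_le_mul_of_nonneg_left hsq hGm.le
      linarith [mul_comm κ Gm ▸ this]
    rw [hempty]
    simp
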